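/- arXiv:2605.25780 — 2 statements merged into one kernel-verified Lean document; each statement's English description precedes it below -/
import Mathlib

section
/- Let Φ be a Young function satisfying both the Δ2- and ∇2-conditions. Then there exists r with 1 < r < ∞ and a constant C_r > 0 such that for every t > 0, the Lebesgue–Stieltjes integral ∫₀ᵗ s^{-r} dΦ(s) ≤ C_r · Φ(t)/t^r. -/
open MeasureTheory Set

private lemma nabla_iter (Φ : StieltjesFunction ℝ) {l : ℝ} (hl1 : 1 < l)
    (hl : ∀ t > 0, 2 * l * Φ t ≤ Φ (l * t)) :
    ∀ (k : ℕ) (t : ℝ), 0 < t → Φ (t / l ^ k) ≤ Φ t / (2 * l) ^ k := by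
  have hlpos : (0:ℝ) < l := lt_trans one_pos hl1
  have h2l : (0:ℝ) < 2 * l := by positivity
  intro k
  induction k with
  | zero => intro t ht; simp
  | succ k ih =>
    intro t ht
    have htl : 0 < t / l := by positivity
    have h1 : Φ (t / l) ≤ Φ t / (2 * l) := by
      have := hl (t / l) htl
      rw [mul_div_cancel₀ _ (ne_of_gt hlpos)] at this
      rw [div_eq_inv_mul, ← le_div_iff₀' h2l] at this
      simpa [div_eq_inv_mul] using this
    have h2 : Φ ((t / l) / l ^ k) ≤ Φ (t / l) / (2 * l) ^ k := ih (t / l) htl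
    have heq : t / l ^ (k + 1) = (t / l) / l ^ k := by
      rw [div_div, pow_succ']
    rw [heq]
    calc Φ ((t / l) / l ^ k) ≤ Φ (t / l) / (2 * l) ^ k := h2
      _ ≤ (Φ t / (2 * l)) / (2 * l) ^ k := by
          exact div_le_div_of_nonneg_right h1 (by positivity)
      _ = Φ t / (2 * l) ^ (k + 1) := by rw [div_div, pow_succ']

/-- If Φ is a Young function satisfying Δ2 and ∇2, then there exist
1 < r < ∞ and C_r > 0 such that ∫₀ᵗ s^{-r} dΦ(s) ≤ C_r Φ(t)/t^r for all t > 0,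
where the integral is the Lebesgue–Stieltjes integral with respect to Φ. -/
theorem stmt_5 (Φ : StieltjesFunction ℝ)
    (hΦ0 : Φ 0 = 0)
    (hnonneg : ∀ t, 0 ≤ t → 0 ≤ Φ t)
    (hmono : StrictMonoOn Φ (Set.Ici 0))
    (hconv : ConvexOn ℝ (Set.Ici 0) Φ)
    (hΔ2 : ∃ μ : ℝ, 1 < μ ∧ ∀ t > 0, Φ (2 * t) ≤ μ * Φ t)
    (hnabla2 : ∃ l : ℝ, 1 < l ∧ ∀ t > 0, 2 * l * Φ t ≤ Φ (l * t)) :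
    ∃ r : ℝ, 1 < r ∧ ∃ Cr : ℝ, 0 < Cr ∧ ∀ t : ℝ, 0 < t →
      ∫⁻ s in Set.Ioc (0:ℝ) t, ENNReal.ofReal (s ^ (-r)) ∂Φ.measure
        ≤ ENNReal.ofReal (Cr * (Φ t / t ^ r)) := by
  obtain ⟨l, hl1, hl⟩ := hnabla2
  have hlpos : (0:ℝ) < l := lt_trans one_pos hl1
  have hlogl : 0 < Real.log l := Real.log_pos hl1
  set r : ℝ := 1 + Real.log 2 / (2 * Real.log l) with hr_def
  have hr1 : 1 < r := by
    have h : 0 < Real.log 2 / (2 * Real.log l) := by positivity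
    rw [hr_def]; linarith
  -- l ^ (r - 1) < 2
  have hlr1 : l ^ (r - 1) < 2 := by
    have h1 : l ^ (r - 1) = Real.exp ((r - 1) * Real.log l) := by
      rw [Real.rpow_def_of_pos hlpos, mul_comm]
    have h2 : (r - 1) * Real.log l = Real.log 2 / 2 := by
      field_simp [hr_def]
      rw [hr_def]; field_simp; ring
    rw [h1, h2]
    have : Real.log 2 / 2 < Real.log 2 := by
      have := Real.log_pos one_lt_two
      linarith
    calc Real.exp (Real.log 2 / 2) < Real.exp (Real.log 2) := Real.exp_lt_exp.mpr this
      _ = 2 := Real.exp_log two_pos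
  set q : ℝ := l ^ (r - 1) / 2 with hq_def
  have hq0 : 0 < q := by
    have : 0 < l ^ (r - 1) := Real.rpow_pos_of_pos hlpos _
    positivity
  have hq1 : q < 1 := by
    rw [hq_def, div_lt_one two_pos]; exact hlr1
  set Cr : ℝ := l ^ r / (1 - q) with hCr_def
  have hlr_pos : 0 < l ^ r := Real.rpow_pos_of_pos hlpos _
  have hCr : 0 < Cr := by
    have : 0 < 1 - q := by linarith
    positivity
  refine ⟨r, hr1, Cr, hCr, fun t ht => ?_⟩
  -- the dyadic-like pieces
  set a : ℕ → ℝ := fun k => t / l ^ k with ha_def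
  have hapos : ∀ k, 0 < a k := fun k => by
    have : (0:ℝ) < l ^ k := pow_pos hlpos k
    exact div_pos ht this
  have hamono : ∀ k, a (k + 1) < a k := fun k =>
    div_lt_div_of_pos_left ht (pow_pos hlpos k) (pow_lt_pow_right₀ hl1 (Nat.lt_succ_self k))
  -- covering
  have hcover : Set.Ioc (0:ℝ) t ⊆ ⋃ k : ℕ, Set.Ioc (a (k+1)) (a k) := by
    intro x hx
    obtain ⟨hx0, hxt⟩ := hx
    have hex : ∃ n : ℕ, t / l ^ n < x := by
      obtain ⟨n, hn⟩ := pow_unbounded_of_one_lt (t / x) hl1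
      exact ⟨n, by rwa [div_lt_iff₀ (pow_pos hlpos n), ← div_lt_iff₀' hx0] ⟩
    classical
    set n := Nat.find hex with hn_def
    have hn : t / l ^ n < x := Nat.find_spec hex
    have hn0 : n ≠ 0 := by
      intro h
      rw [h] at hn
      simp at hn
      linarith
    obtain ⟨m, hm⟩ : ∃ m, n = m + 1 := ⟨n - 1, (Nat.succ_pred_eq_of_pos (Nat.pos_of_ne_zero hn0)).symm⟩
    have hmin : ¬ (t / l ^ m < x) := Nat.find_min hex (by omega)
    refine Set.mem_iUnion.mpr ⟨m, ?_, not_lt.mp hmin⟩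
    rw [← hm]; exact hn
  have hΦnn : ∀ s, 0 ≤ s → 0 ≤ Φ s := hnonneg
  -- bound each piece
  have hpiece : ∀ k : ℕ,
      (∫⁻ s in Set.Ioc (a (k+1)) (a k), ENNReal.ofReal (s ^ (-r)) ∂Φ.measure)
        ≤ ENNReal.ofReal (l ^ r * q ^ k * (Φ t / t ^ r)) := by
    intro k
    have hstep1 : (∫⁻ s in Set.Ioc (a (k+1)) (a k), ENNReal.ofReal (s ^ (-r)) ∂Φ.measure)
        ≤ ENNReal.ofReal ((a (k+1)) ^ (-r)) * Φ.measure (Set.Ioc (a (k+1)) (a k)) := by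
      rw [← setLIntegral_const]
      apply setLIntegral_mono measurable_const
      intro x hx
      apply ENNReal.ofReal_le_ofReal
      exact Real.rpow_le_rpow_of_nonpos (hapos (k+1)) hx.1.le (by linarith)
    have hmeas : Φ.measure (Set.Ioc (a (k+1)) (a k)) ≤ ENNReal.ofReal (Φ t / (2 * l) ^ k) := by
      rw [StieltjesFunction.measure_Ioc]
      apply ENNReal.ofReal_le_ofReal
      have h1 : Φ (a k) ≤ Φ t / (2 * l) ^ k := nabla_iter Φ hl1 hl k t ht
      have h2 : 0 ≤ Φ (a (k+1)) := hΦnn _ (hapos (k+1)).le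
      linarith
    calc (∫⁻ s in Set.Ioc (a (k+1)) (a k), ENNReal.ofReal (s ^ (-r)) ∂Φ.measure)
        ≤ ENNReal.ofReal ((a (k+1)) ^ (-r)) * ENNReal.ofReal (Φ t / (2 * l) ^ k) :=
          hstep1.trans (mul_le_mul_right hmeas _)
      _ = ENNReal.ofReal ((a (k+1)) ^ (-r) * (Φ t / (2 * l) ^ k)) := by
          rw [← ENNReal.ofReal_mul (Real.rpow_nonneg (hapos (k+1)).le _)]
      _ ≤ ENNReal.ofReal (l ^ r * q ^ k * (Φ t / t ^ r)) := by
          apply ENNReal.ofReal_le_ofReal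
          apply le_of_eq
          -- (t / l^(k+1)) ^ (-r) * (Φ t / (2l)^k) = l^r * q^k * (Φ t / t^r)
          have hLpos : (0:ℝ) < l ^ (k+1) := pow_pos hlpos _
          have h1 : (a (k+1)) ^ (-r) = (l ^ (k+1) : ℝ) ^ r / t ^ r := by
            rw [ha_def]
            rw [Real.rpow_neg (by positivity), Real.div_rpow ht.le hLpos.le]
            rw [inv_div]
          rw [h1]
          have h2 : ((l : ℝ) ^ (k+1)) ^ r = l ^ r * (l ^ r) ^ k := by
            rw [← Real.rpow_natCast l (k+1), ← Real.rpow_mul hlpos.le,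
              ← Real.rpow_natCast (l ^ r) k, ← Real.rpow_mul hlpos.le,
              ← Real.rpow_add hlpos]
            congr 1
            push_cast
            ring
          rw [h2]
          have hq2l : q * (2 * l) = l ^ r := by
            have h := Real.rpow_add hlpos (r - 1) 1
            rw [Real.rpow_one] at h
            have he : r - 1 + 1 = r := by ring
            rw [he] at h
            rw [hq_def, h]
            ring
          have h3 : q ^ k * (2 * l) ^ k = (l ^ r) ^ k := by
            rw [← mul_pow, hq2l]
          have h2lk : (0:ℝ) < (2 * l) ^ k := by positivity
          have htr : (0:ℝ) < t ^ r := Real.rpow_pos_of_pos ht r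
          rw [← h3]
          field_simp
  -- sum up
  calc (∫⁻ s in Set.Ioc (0:ℝ) t, ENNReal.ofReal (s ^ (-r)) ∂Φ.measure)
      ≤ ∫⁻ s in ⋃ k : ℕ, Set.Ioc (a (k+1)) (a k), ENNReal.ofReal (s ^ (-r)) ∂Φ.measure := by
        exact lintegral_mono_set hcover
    _ ≤ ∑' k : ℕ, ∫⁻ s in Set.Ioc (a (k+1)) (a k), ENNReal.ofReal (s ^ (-r)) ∂Φ.measure :=
        lintegral_iUnion_le _ _
    _ ≤ ∑' k : ℕ, ENNReal.ofReal (l ^ r * q ^ k * (Φ t / t ^ r)) := ENNReal.tsum_le_tsum hpiece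
    _ = ∑' k : ℕ, ENNReal.ofReal (l ^ r * (Φ t / t ^ r)) * (ENNReal.ofReal q) ^ k := by
        refine tsum_congr fun k => ?_
        have hΦt : 0 ≤ Φ t := hΦnn t ht.le
        have htr : (0:ℝ) ≤ t ^ r := (Real.rpow_pos_of_pos ht r).le
        rw [← ENNReal.ofReal_pow hq0.le,
          ← ENNReal.ofReal_mul (by positivity : (0:ℝ) ≤ l ^ r * (Φ t / t ^ r))]
        congr 1; ring
    _ = ENNReal.ofReal (l ^ r * (Φ t / t ^ r)) * (1 - ENNReal.ofReal q)⁻¹ := by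
        rw [ENNReal.tsum_mul_left, ENNReal.tsum_geometric]
    _ ≤ ENNReal.ofReal (Cr * (Φ t / t ^ r)) := by
        have h1 : (1 : ENNReal) - ENNReal.ofReal q = ENNReal.ofReal (1 - q) := by
          rw [ENNReal.ofReal_sub _ hq0.le, ENNReal.ofReal_one]
        have hΦt : 0 ≤ Φ t := hΦnn t ht.le
        have htr : (0:ℝ) ≤ t ^ r := (Real.rpow_pos_of_pos ht r).le
        rw [h1, ← ENNReal.ofReal_inv_of_pos (by linarith : (0:ℝ) < 1 - q),
          ← ENNReal.ofReal_mul (by positivity : (0:ℝ) ≤ l ^ r * (Φ t / t ^ r))]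
        apply ENNReal.ofReal_le_ofReal
        apply le_of_eq
        rw [hCr_def]
        ring
end

section
/- Let Φ be a Young function satisfying both the Δ2- and ∇2-conditions. Then there exists p with 1 < p < ∞ and a constant C_p > 0 such that for every t > 0, the Lebesgue–Stieltjes integral ∫ₜ^∞ s^{-p} dΦ(s) ≤ C_p · Φ(t)/t^p. -/
open MeasureTheory Set

/-- If Φ is a Young function satisfying Δ2 and ∇2, then there exist
1 < p < ∞ and C_p > 0 such that ∫ₜ^∞ s^{-p} dΦ(s) ≤ C_p Φ(t)/t^p for all t > 0,
where the integral is the Lebesgue–Stieltjes integral with respect to Φ. -/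
theorem stmt_6 (Φ : StieltjesFunction ℝ)
    (hΦ0 : Φ 0 = 0)
    (hnonneg : ∀ t, 0 ≤ t → 0 ≤ Φ t)
    (hmono : StrictMonoOn Φ (Set.Ici 0))
    (hconv : ConvexOn ℝ (Set.Ici 0) Φ)
    (hΔ2 : ∃ μ : ℝ, 1 < μ ∧ ∀ t > 0, Φ (2 * t) ≤ μ * Φ t)
    (hnabla2 : ∃ l : ℝ, 1 < l ∧ ∀ t > 0, 2 * l * Φ t ≤ Φ (l * t)) :
    ∃ p : ℝ, 1 < p ∧ ∃ Cp : ℝ, 0 < Cp ∧ ∀ t : ℝ, 0 < t →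
      ∫⁻ s in Set.Ioi t, ENNReal.ofReal (s ^ (-p)) ∂Φ.measure
        ≤ ENNReal.ofReal (Cp * (Φ t / t ^ p)) := by
  obtain ⟨μ, hμ1, hμ⟩ := hΔ2
  have hμ0 : (0:ℝ) < μ := lt_trans one_pos hμ1
  set p : ℝ := Real.logb 2 μ + 2 with hp_def
  have hlogb : 0 < Real.logb 2 μ := Real.logb_pos one_lt_two hμ1
  have hp1 : 1 < p := by simp only [hp_def]; linarith
  have h2p : (2:ℝ) ^ p = μ * 4 := by
    rw [hp_def, Real.rpow_add two_pos, Real.rpow_logb two_pos (by norm_num) hμ0]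
    norm_num
  refine ⟨p, hp1, 2*μ, by positivity, ?_⟩
  intro t ht
  have hΦt0 : 0 ≤ Φ t := hnonneg t ht.le
  -- iterate Δ2
  have hiter : ∀ k : ℕ, Φ (2^(k+1) * t) ≤ μ^(k+1) * Φ t := by
    intro k; induction k with
    | zero => simpa using hμ t ht
    | succ k ih =>
      have h1 : Φ (2 * (2^(k+1) * t)) ≤ μ * Φ (2^(k+1)*t) := hμ _ (by positivity)
      calc Φ (2^(k+1+1) * t) = Φ (2 * (2^(k+1)*t)) := by ring_nf
        _ ≤ μ * Φ (2^(k+1)*t) := h1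
        _ ≤ μ * (μ^(k+1) * Φ t) := by
            exact mul_le_mul_of_nonneg_left ih hμ0.le
        _ = μ^(k+1+1) * Φ t := by ring
  -- dyadic decomposition
  have hUnion : Ioi t = ⋃ k : ℕ, Ioc ((2:ℝ)^k * t) (2^(k+1) * t) := by
    ext x
    simp only [mem_Ioi, mem_iUnion, mem_Ioc]
    constructor
    · intro hx
      have hex : ∃ k : ℕ, x ≤ 2^(k+1) * t := by
        obtain ⟨n, hn⟩ := pow_unbounded_of_one_lt (x / t) (one_lt_two (α := ℝ))
        refine ⟨n, ?_⟩
        have : x < 2 ^ n * t := by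
          rw [div_lt_iff₀ ht] at hn; linarith
        have h2 : (2:ℝ)^n * t ≤ 2^(n+1) * t := by
          have : (2:ℝ)^n ≤ 2^(n+1) := pow_le_pow_right₀ (by norm_num) (Nat.le_succ n)
          nlinarith
        linarith
      refine ⟨Nat.find hex, ?_, Nat.find_spec hex⟩
      rcases Nat.eq_zero_or_pos (Nat.find hex) with h0 | hpos
      · rw [h0]; simpa using hx
      · obtain ⟨m, hm⟩ := Nat.exists_eq_succ_of_ne_zero hpos.ne'
        have := Nat.find_min hex (m := m) (by omega)
        push_neg at this
        rw [hm]; exact this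
    · rintro ⟨k, h1, _⟩
      exact lt_of_le_of_lt (le_mul_of_one_le_left ht.le (one_le_pow₀ (by norm_num))) h1
  -- per-piece bound
  have hkey : ∀ k : ℕ, ∫⁻ s in Ioc ((2:ℝ)^k * t) (2^(k+1) * t), ENNReal.ofReal (s ^ (-p)) ∂Φ.measure
      ≤ ENNReal.ofReal (μ * (Φ t / t ^ p)) * (ENNReal.ofReal (1/2)) ^ k := by
    intro k
    have hb : (0:ℝ) < 2^k * t := by positivity
    have step1 : ∫⁻ s in Ioc ((2:ℝ)^k * t) (2^(k+1) * t), ENNReal.ofReal (s ^ (-p)) ∂Φ.measure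
        ≤ ENNReal.ofReal (((2:ℝ)^k * t) ^ (-p)) * Φ.measure (Ioc ((2:ℝ)^k * t) (2^(k+1) * t)) := by
      rw [← setLIntegral_const]
      refine setLIntegral_mono measurable_const ?_
      intro x hx
      exact ENNReal.ofReal_le_ofReal
        (Real.rpow_le_rpow_of_nonpos hb hx.1.le (by linarith))
    have step2 : Φ.measure (Ioc ((2:ℝ)^k * t) (2^(k+1) * t))
        ≤ ENNReal.ofReal (μ^(k+1) * Φ t) := by
      rw [Φ.measure_Ioc]
      refine ENNReal.ofReal_le_ofReal ?_
      have h0 : 0 ≤ Φ ((2:ℝ)^k * t) := hnonneg _ hb.le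
      have := hiter k
      linarith
    have hreal : ((2:ℝ)^k * t) ^ (-p) * (μ^(k+1) * Φ t)
        ≤ (μ * (Φ t / t ^ p)) * (1/2)^k := by
      have h1 : ((2:ℝ)^k * t) ^ (-p) = ((2:ℝ)^k) ^ (-p) * t ^ (-p) :=
        Real.mul_rpow (by positivity) ht.le
      have h2 : ((2:ℝ)^k : ℝ) ^ (-p) = ((2:ℝ) ^ (-p)) ^ k := by
        rw [← Real.rpow_natCast (2:ℝ) k, ← Real.rpow_natCast ((2:ℝ) ^ (-p)) k,
          ← Real.rpow_mul (by norm_num), ← Real.rpow_mul (by norm_num), mul_comm]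
      have ht' : t ^ (-p) = (t ^ p)⁻¹ := Real.rpow_neg ht.le p
      have haμ : (2:ℝ) ^ (-p) * μ = 1/4 := by
        rw [Real.rpow_neg (by norm_num), h2p]
        field_simp
      have heq : ((2:ℝ)^k * t) ^ (-p) * (μ^(k+1) * Φ t)
          = ((2:ℝ) ^ (-p) * μ)^k * (μ * (Φ t / t ^ p)) := by
        rw [h1, h2, ht', mul_pow, pow_succ]
        ring
      rw [heq, haμ]
      have hpow : ((1:ℝ)/4)^k ≤ (1/2)^k :=
        pow_le_pow_left₀ (by norm_num) (by norm_num) k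
      have hC : 0 ≤ μ * (Φ t / t ^ p) := by positivity
      calc ((1:ℝ)/4)^k * (μ * (Φ t / t ^ p)) ≤ (1/2)^k * (μ * (Φ t / t ^ p)) :=
            mul_le_mul_of_nonneg_right hpow hC
        _ = (μ * (Φ t / t ^ p)) * (1/2)^k := mul_comm _ _
    calc ∫⁻ s in Ioc ((2:ℝ)^k * t) (2^(k+1) * t), ENNReal.ofReal (s ^ (-p)) ∂Φ.measure
        ≤ ENNReal.ofReal (((2:ℝ)^k * t) ^ (-p)) * Φ.measure (Ioc ((2:ℝ)^k * t) (2^(k+1) * t)) := step1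
      _ ≤ ENNReal.ofReal (((2:ℝ)^k * t) ^ (-p)) * ENNReal.ofReal (μ^(k+1) * Φ t) :=
          mul_le_mul_right step2 _
      _ = ENNReal.ofReal (((2:ℝ)^k * t) ^ (-p) * (μ^(k+1) * Φ t)) :=
          (ENNReal.ofReal_mul (by positivity)).symm
      _ ≤ ENNReal.ofReal ((μ * (Φ t / t ^ p)) * (1/2)^k) := ENNReal.ofReal_le_ofReal hreal
      _ = ENNReal.ofReal (μ * (Φ t / t ^ p)) * (ENNReal.ofReal (1/2)) ^ k := by
          rw [ENNReal.ofReal_mul (by positivity), ENNReal.ofReal_pow (by norm_num)]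
  have hhalf : ENNReal.ofReal (1/2 : ℝ) = 2⁻¹ := by
    rw [ENNReal.ofReal_div_of_pos (by norm_num)]
    simp
  have hsub : (1:ENNReal) - 2⁻¹ = 2⁻¹ :=
    ENNReal.sub_eq_of_eq_add (by norm_num) ENNReal.inv_two_add_inv_two.symm
  have hgeom : ∑' k : ℕ, (ENNReal.ofReal (1/2 : ℝ)) ^ k = 2 := by
    rw [hhalf, ENNReal.tsum_geometric, hsub]
    simp
  calc ∫⁻ s in Ioi t, ENNReal.ofReal (s ^ (-p)) ∂Φ.measure
      = ∫⁻ s in ⋃ k : ℕ, Ioc ((2:ℝ)^k * t) (2^(k+1) * t), ENNReal.ofReal (s ^ (-p)) ∂Φ.measure := by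
        rw [hUnion]
    _ ≤ ∑' k : ℕ, ∫⁻ s in Ioc ((2:ℝ)^k * t) (2^(k+1) * t), ENNReal.ofReal (s ^ (-p)) ∂Φ.measure :=
        lintegral_iUnion_le _ _
    _ ≤ ∑' k : ℕ, ENNReal.ofReal (μ * (Φ t / t ^ p)) * (ENNReal.ofReal (1/2)) ^ k :=
        ENNReal.tsum_le_tsum hkey
    _ = ENNReal.ofReal (μ * (Φ t / t ^ p)) * 2 := by
        rw [ENNReal.tsum_mul_left, hgeom]
    _ = ENNReal.ofReal (2 * μ * (Φ t / t ^ p)) := by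
        have h2' : ENNReal.ofReal ((2:ℝ) * (μ * (Φ t / t ^ p)))
            = ENNReal.ofReal 2 * ENNReal.ofReal (μ * (Φ t / t ^ p)) :=
          ENNReal.ofReal_mul (by norm_num)
        rw [show (2:ℝ) * μ * (Φ t / t ^ p) = 2 * (μ * (Φ t / t ^ p)) by ring, h2',
          ENNReal.ofReal_ofNat, mul_comm]
end
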